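/- Let q ≥ 3 and r, r' ≥ 1. If (S0, S1) is a spherical bitrade in the Hamming graph H(qr, q) and (S0', S1') is a spherical bitrade in H(qr', q), then (S0 × S0' ∪ S1 × S1', S0 × S1' ∪ S1 × S0') is a spherical bitrade in H(q(r+r'), q), where C × D = {x|y : x ∈ C, y ∈ D} and x|y denotes the concatenation of the tuples x and y. -/

import Mathlib

open scoped BigOperators

/-- The ball of radius 1 centered at `x` in a graph `G`. -/
def ball1 {V : Type*} (G : SimpleGraph V) (x : V) : Set V := {y | y = x ∨ G.Adj x y}

/-- A perfect one-error-correcting code: the balls of radius 1 centered at the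
vertices of `C` partition the vertex set. -/
def IsPerfectCode {V : Type*} (G : SimpleGraph V) (C : Set V) : Prop :=
  ∀ x : V, ∃! c, c ∈ C ∧ c ∈ ball1 G x

/-- A perfect bitrade: a pair of disjoint nonempty vertex sets such that every ball of
radius 1 contains exactly one vertex of each, or none of either. -/
def IsPerfectBitrade {V : Type*} (G : SimpleGraph V) (T0 T1 : Set V) : Prop :=
  Disjoint T0 T1 ∧ T0.Nonempty ∧ T1.Nonempty ∧
    ∀ x : V,
      ((∃! y, y ∈ T0 ∧ y ∈ ball1 G x) ∧ (∃! y, y ∈ T1 ∧ y ∈ ball1 G x)) ∨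
        (∀ y, y ∈ T0 ∪ T1 → y ∉ ball1 G x)

/-- A spherical bitrade: a pair of disjoint nonempty vertex sets such that every sphere of
radius 1 contains exactly one vertex of each, or none of either. -/
def IsSphericalBitrade {V : Type*} (G : SimpleGraph V) (S0 S1 : Set V) : Prop :=
  Disjoint S0 S1 ∧ S0.Nonempty ∧ S1.Nonempty ∧
    ∀ x : V,
      ((∃! y, y ∈ S0 ∧ G.Adj x y) ∧ (∃! y, y ∈ S1 ∧ G.Adj x y)) ∨
        (∀ y, y ∈ S0 ∪ S1 → ¬ G.Adj x y)

/-- The Hamming graph `H(n,q)`: vertices are `n`-tuples over an alphabet of size `q`,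
adjacent iff they differ in exactly one coordinate. -/
def hammingGraph (n q : ℕ) : SimpleGraph (Fin n → Fin q) where
  Adj x y := hammingDist x y = 1
  symm := ⟨fun x y (h : hammingDist x y = 1) => (hammingDist_comm y x).trans h⟩
  loopless := ⟨fun x (h : hammingDist x x = 1) => by simp [hammingDist_self] at h⟩

/-- `f` is a `μ`-eigenfunction of `G`: `f` is not identically zero and
`μ · f x = ∑_{y ∈ O(x)} f y` for every vertex `x`. -/
def IsEigenfun {V : Type*} (G : SimpleGraph V) (μ : ℝ) (f : V → ℝ) : Prop :=
  f ≠ 0 ∧ ∀ x : V, μ * f x = ∑ᶠ y ∈ G.neighborSet x, f y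

/-- The characteristic function of a set of vertices. -/
noncomputable def chi {V : Type*} (C : Set V) : V → ℝ := Set.indicator C 1

/-- The code `C` has minimum (graph) distance exactly `d`. -/
def HasMinDist {V : Type*} (G : SimpleGraph V) (C : Set V) (d : ℕ) : Prop :=
  (∀ x ∈ C, ∀ y ∈ C, x ≠ y → (d : ℕ∞) ≤ G.edist x y) ∧
    ∃ x ∈ C, ∃ y ∈ C, x ≠ y ∧ G.edist x y = d

/-- The code `C` of `n`-tuples has minimum Hamming distance exactly `d`. -/
def HasMinHDist {n q : ℕ} (C : Set (Fin n → Fin q)) (d : ℕ) : Prop :=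
  (∀ x ∈ C, ∀ y ∈ C, x ≠ y → d ≤ hammingDist x y) ∧
    ∃ x ∈ C, ∃ y ∈ C, x ≠ y ∧ hammingDist x y = d

/-- `G` is distance-regular with intersection numbers `p i j k`. -/
def IsDistRegular {V : Type*} (G : SimpleGraph V) (p : ℕ → ℕ → ℕ → ℕ) : Prop :=
  G.Connected ∧ ∀ (i j k : ℕ) (x y : V), G.edist x y = k →
    {z : V | G.edist x z = i ∧ G.edist z y = j}.ncard = p i j k

namespace Statement9Aux

theorem hd_one {ι α : Type*} [Fintype ι] [DecidableEq ι] [DecidableEq α] {x y : ι → α} :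
    hammingDist x y = 1 ↔ ∃ i, x i ≠ y i ∧ ∀ j, j ≠ i → x j = y j := by
  unfold hammingDist
  rw [Finset.card_eq_one]
  constructor
  · rintro ⟨i, hi⟩
    refine ⟨i, ?_, ?_⟩
    · have : i ∈ ({i} : Finset ι) := Finset.mem_singleton_self i
      rw [← hi] at this; simpa using this
    · intro j hj; by_contra hne
      have hmem : j ∈ ({i} : Finset ι) := by rw [← hi]; simp [hne]
      exact hj (Finset.mem_singleton.mp hmem)
  · rintro ⟨i, hi, hall⟩
    refine ⟨i, ?_⟩
    ext j
    simp only [Finset.mem_filter, Finset.mem_univ, true_and, Finset.mem_singleton]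
    constructor
    · intro hne; by_contra hji; exact hne (hall j hji)
    · rintro rfl; exact hi

theorem hd_append {α : Type*} [DecidableEq α] {m n : ℕ} (x x' : Fin m → α) (y y' : Fin n → α) :
    hammingDist (Fin.append x y) (Fin.append x' y') = hammingDist x x' + hammingDist y y' := by
  have H : ∀ (k : ℕ) (a b : Fin k → α),
      hammingDist a b = ∑ i, if a i ≠ b i then 1 else 0 := by
    intro k a b
    have := Finset.natCast_card_filter (R := ℕ) (fun i => a i ≠ b i) Finset.univ
    simpa [hammingDist] using this
  rw [H, H, H, Fin.sum_univ_add]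
  simp [Fin.append_left, Fin.append_right]

theorem hd_cast {α : Type*} [DecidableEq α] {m n N : ℕ} (hN : N = m + n)
    (x u : Fin m → α) (y v : Fin n → α) :
    hammingDist (fun i => Fin.append x y (Fin.cast hN i))
      (fun i => Fin.append u v (Fin.cast hN i)) = hammingDist x u + hammingDist y v := by
  subst hN
  simp only [Fin.cast_refl, id_eq]
  exact hd_append x u y v

theorem decomp {α : Type*} {m n N : ℕ} (hN : N = m + n) (z : Fin N → α) :
    ∃ x y, z = fun i => Fin.append x y (Fin.cast hN i) := by
  subst hN
  refine ⟨fun i => z (Fin.castAdd n i), fun j => z (Fin.natAdd m j), ?_⟩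
  funext k
  simp only [Fin.cast_refl, id_eq]
  induction k using Fin.addCases with
  | left i => rw [Fin.append_left]
  | right j => rw [Fin.append_right]

theorem append_cast_inj {α : Type*} {m n N : ℕ} (hN : N = m + n) {x u : Fin m → α}
    {y v : Fin n → α}
    (hE : (fun i => Fin.append x y (Fin.cast hN i)) = fun i => Fin.append u v (Fin.cast hN i)) :
    x = u ∧ y = v := by
  subst hN
  simp only [Fin.cast_refl, id_eq] at hE
  constructor
  · funext i
    simpa using congrFun hE (Fin.castAdd n i)
  · funext j
    simpa using congrFun hE (Fin.natAdd m j)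

theorem adj_append_iff {q m n N : ℕ} (hN : N = m + n) (x u : Fin m → Fin q)
    (y v : Fin n → Fin q) :
    (hammingGraph N q).Adj (fun i => Fin.append x y (Fin.cast hN i))
        (fun i => Fin.append u v (Fin.cast hN i)) ↔
      ((hammingGraph m q).Adj x u ∧ y = v) ∨ (x = u ∧ (hammingGraph n q).Adj y v) := by
  show hammingDist _ _ = 1 ↔ (hammingDist x u = 1 ∧ y = v) ∨ (x = u ∧ hammingDist y v = 1)
  rw [hd_cast hN x u y v]
  constructor
  · intro h1
    rcases (show hammingDist x u = 0 ∧ hammingDist y v = 1 ∨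
        hammingDist x u = 1 ∧ hammingDist y v = 0 by omega) with ⟨h2, h3⟩ | ⟨h2, h3⟩
    · exact Or.inr ⟨hammingDist_eq_zero.mp h2, h3⟩
    · exact Or.inl ⟨h2, hammingDist_eq_zero.mp h3⟩
  · rintro (⟨h2, rfl⟩ | ⟨rfl, h2⟩) <;> simp [h2, hammingDist_self]

theorem bitrade_swap {V : Type*} {G : SimpleGraph V} {S0 S1 : Set V}
    (h : IsSphericalBitrade G S0 S1) : IsSphericalBitrade G S1 S0 :=
  ⟨h.1.symm, h.2.2.1, h.2.1, fun x => (h.2.2.2 x).imp (fun hB => ⟨hB.2, hB.1⟩)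
    (fun hn y hy => hn y (hy.elim Or.inr Or.inl))⟩

theorem no_adj_00 {q n : ℕ} (hq : 3 ≤ q) {S0 S1 : Set (Fin n → Fin q)}
    (hb : IsSphericalBitrade (hammingGraph n q) S0 S1) :
    ∀ a ∈ S0, ∀ b ∈ S0, ¬ (hammingGraph n q).Adj a b := by
  intro a ha b hbm hadj
  have h1 : hammingDist a b = 1 := hadj
  obtain ⟨i, hne, hall⟩ := hd_one.mp h1
  have hab : a ≠ b := by rintro rfl; exact hne rfl
  obtain ⟨c, hc1, hc2⟩ : ∃ c : Fin q, c ≠ a i ∧ c ≠ b i := by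
    by_contra hcon
    push_neg at hcon
    have hsub : (Finset.univ : Finset (Fin q)) ⊆ {a i, b i} := by
      intro c _
      simp only [Finset.mem_insert, Finset.mem_singleton]
      by_cases h : c = a i
      · exact Or.inl h
      · exact Or.inr (hcon c h)
    have h2 := Finset.card_le_card hsub
    have h3 : ({a i, b i} : Finset (Fin q)).card ≤ 2 :=
      (Finset.card_insert_le _ _).trans (by simp)
    simp only [Finset.card_univ, Fintype.card_fin] at h2
    omega
  have hwa : (hammingGraph n q).Adj (Function.update a i c) a := by
    show hammingDist _ _ = 1
    refine hd_one.mpr ⟨i, ?_, fun j hj => ?_⟩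
    · simpa using hc1
    · simp [Function.update_of_ne hj]
  have hwb : (hammingGraph n q).Adj (Function.update a i c) b := by
    show hammingDist _ _ = 1
    refine hd_one.mpr ⟨i, ?_, fun j hj => ?_⟩
    · simpa using hc2
    · rw [Function.update_of_ne hj]; exact hall j hj
  rcases hb.2.2.2 (Function.update a i c) with ⟨⟨u, _, huniq⟩, _⟩ | hnone
  · exact hab ((huniq a ⟨ha, hwa⟩).trans (huniq b ⟨hbm, hwb⟩).symm)
  · exact hnone a (Or.inl ha) hwa

theorem no_adj_01 {q n : ℕ} (hq : 3 ≤ q) {S0 S1 : Set (Fin n → Fin q)}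
    (hb : IsSphericalBitrade (hammingGraph n q) S0 S1) :
    ∀ a ∈ S0, ∀ b ∈ S1, ¬ (hammingGraph n q).Adj a b := by
  intro a ha b hbm hadj
  rcases hb.2.2.2 a with ⟨⟨u, ⟨hu, hadju⟩, _⟩, _⟩ | hnone
  · exact no_adj_00 hq hb a ha u hu hadju
  · exact hnone b (Or.inr hbm) hadj

theorem code_no_adj {q n : ℕ} (hq : 3 ≤ q) {S0 S1 : Set (Fin n → Fin q)}
    (hb : IsSphericalBitrade (hammingGraph n q) S0 S1) :
    ∀ a ∈ S0 ∪ S1, ∀ b ∈ S0 ∪ S1, ¬ (hammingGraph n q).Adj a b := by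
  rintro a (ha | ha) b (hbm | hbm)
  · exact no_adj_00 hq hb a ha b hbm
  · exact no_adj_01 hq hb a ha b hbm
  · intro hadj
    exact no_adj_01 hq (bitrade_swap hb) a ha b hbm hadj
  · exact no_adj_00 hq (bitrade_swap hb) a ha b hbm

theorem exu_pair {q m n N : ℕ} (hN : N = m + n)
    {A B : Set (Fin m → Fin q)} {P Q : Set (Fin n → Fin q)}
    {x : Fin m → Fin q} {y : Fin n → Fin q}
    (hxA : x ∉ A) (hxB : x ∉ B) (hyP : y ∈ P) (hyQ : y ∉ Q)
    (hEx : ∃! u, u ∈ A ∧ (hammingGraph m q).Adj x u) :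
    ∃! w, w ∈ (Set.image2 (fun a b i => Fin.append a b (Fin.cast hN i)) A P ∪
          Set.image2 (fun a b i => Fin.append a b (Fin.cast hN i)) B Q) ∧
        (hammingGraph N q).Adj (fun i => Fin.append x y (Fin.cast hN i)) w := by
  obtain ⟨u0, ⟨hu0A, hadj0⟩, huniq⟩ := hEx
  refine ⟨fun i => Fin.append u0 y (Fin.cast hN i),
    ⟨Or.inl (Set.mem_image2_of_mem hu0A hyP),
      (adj_append_iff hN x u0 y y).mpr (Or.inl ⟨hadj0, rfl⟩)⟩, ?_⟩
  rintro w ⟨(⟨u, hu, v, hv, rfl⟩ | ⟨u, hu, v, hv, rfl⟩), hadj⟩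
  · rcases (adj_append_iff hN x u y v).mp hadj with ⟨h1, rfl⟩ | ⟨rfl, h2⟩
    · rw [huniq u ⟨hu, h1⟩]
    · exact absurd hu hxA
  · rcases (adj_append_iff hN x u y v).mp hadj with ⟨h1, rfl⟩ | ⟨rfl, h2⟩
    · exact absurd hv hyQ
    · exact absurd hu hxB

theorem exu_pair' {q m n N : ℕ} (hN : N = m + n)
    {A B : Set (Fin m → Fin q)} {P Q : Set (Fin n → Fin q)}
    {x : Fin m → Fin q} {y : Fin n → Fin q}
    (hNx : ∀ u, (u ∈ A ∨ u ∈ B) → ¬ (hammingGraph m q).Adj x u)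
    (hxA : x ∈ A) (hxB : x ∉ B)
    (hEx : ∃! v, v ∈ P ∧ (hammingGraph n q).Adj y v) :
    ∃! w, w ∈ (Set.image2 (fun a b i => Fin.append a b (Fin.cast hN i)) A P ∪
          Set.image2 (fun a b i => Fin.append a b (Fin.cast hN i)) B Q) ∧
        (hammingGraph N q).Adj (fun i => Fin.append x y (Fin.cast hN i)) w := by
  obtain ⟨v0, ⟨hv0P, hadj0⟩, huniq⟩ := hEx
  refine ⟨fun i => Fin.append x v0 (Fin.cast hN i),
    ⟨Or.inl (Set.mem_image2_of_mem hxA hv0P),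
      (adj_append_iff hN x x y v0).mpr (Or.inr ⟨rfl, hadj0⟩)⟩, ?_⟩
  rintro w ⟨(⟨u, hu, v, hv, rfl⟩ | ⟨u, hu, v, hv, rfl⟩), hadj⟩
  · rcases (adj_append_iff hN x u y v).mp hadj with ⟨h1, rfl⟩ | ⟨rfl, h2⟩
    · exact absurd h1 (hNx u (Or.inl hu))
    · rw [huniq v ⟨hv, h2⟩]
  · rcases (adj_append_iff hN x u y v).mp hadj with ⟨h1, rfl⟩ | ⟨rfl, h2⟩
    · exact absurd h1 (hNx u (Or.inr hu))
    · exact absurd hu hxB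

theorem key {q m n N : ℕ} (hq : 3 ≤ q) (hN : N = m + n)
    (S0 S1 : Set (Fin m → Fin q)) (S0' S1' : Set (Fin n → Fin q))
    (hb : IsSphericalBitrade (hammingGraph m q) S0 S1)
    (hb' : IsSphericalBitrade (hammingGraph n q) S0' S1') :
    IsSphericalBitrade (hammingGraph N q)
      (Set.image2 (fun x y i => Fin.append x y (Fin.cast hN i)) S0 S0' ∪
        Set.image2 (fun x y i => Fin.append x y (Fin.cast hN i)) S1 S1')
      (Set.image2 (fun x y i => Fin.append x y (Fin.cast hN i)) S0 S1' ∪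
        Set.image2 (fun x y i => Fin.append x y (Fin.cast hN i)) S1 S0') := by
  obtain ⟨hdisj, ⟨x0, hx0⟩, ⟨x1, hx1⟩, hmain⟩ := hb
  obtain ⟨hdisj', ⟨y0, hy0⟩, ⟨y1, hy1⟩, hmain'⟩ := hb'
  have hbfull : IsSphericalBitrade (hammingGraph m q) S0 S1 :=
    ⟨hdisj, ⟨x0, hx0⟩, ⟨x1, hx1⟩, hmain⟩
  have hbfull' : IsSphericalBitrade (hammingGraph n q) S0' S1' :=
    ⟨hdisj', ⟨y0, hy0⟩, ⟨y1, hy1⟩, hmain'⟩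
  have F := code_no_adj hq hbfull
  have F' := code_no_adj hq hbfull'
  refine ⟨?_, ?_, ?_, ?_⟩
  · -- disjoint
    rw [Set.disjoint_left]
    rintro w (⟨u, hu, v, hv, rfl⟩ | ⟨u, hu, v, hv, rfl⟩)
      (⟨u', hu', v', hv', hE⟩ | ⟨u', hu', v', hv', hE⟩) <;>
      obtain ⟨rfl, rfl⟩ := append_cast_inj hN hE
    · exact Set.disjoint_left.mp hdisj' hv hv'
    · exact Set.disjoint_left.mp hdisj hu hu'
    · exact Set.disjoint_left.mp hdisj hu' hu
    · exact Set.disjoint_left.mp hdisj' hv' hv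
  · exact ⟨_, Or.inl (Set.mem_image2_of_mem hx0 hy0)⟩
  · exact ⟨_, Or.inl (Set.mem_image2_of_mem hx0 hy1)⟩
  · intro z
    obtain ⟨x, y, rfl⟩ := decomp hN z
    have Hx : (x ∉ S0 ∪ S1 ∧ ((∃! u, u ∈ S0 ∧ (hammingGraph m q).Adj x u) ∧
        (∃! u, u ∈ S1 ∧ (hammingGraph m q).Adj x u))) ∨
        (∀ u ∈ S0 ∪ S1, ¬ (hammingGraph m q).Adj x u) := by
      rcases hmain x with hB | hNx
      · left
        refine ⟨fun hxc => ?_, hB⟩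
        obtain ⟨u, ⟨hu, hadj⟩, _⟩ := hB.1
        exact F x hxc u (Or.inl hu) hadj
      · exact Or.inr hNx
    have Hy : (y ∉ S0' ∪ S1' ∧ ((∃! v, v ∈ S0' ∧ (hammingGraph n q).Adj y v) ∧
        (∃! v, v ∈ S1' ∧ (hammingGraph n q).Adj y v))) ∨
        (∀ v ∈ S0' ∪ S1', ¬ (hammingGraph n q).Adj y v) := by
      rcases hmain' y with hB | hNy
      · left
        refine ⟨fun hyc => ?_, hB⟩
        obtain ⟨v, ⟨hv, hadj⟩, _⟩ := hB.1
        exact F' y hyc v (Or.inl hv) hadj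
      · exact Or.inr hNy
    rcases Hx with ⟨hxc, hx0e, hx1e⟩ | hNx
    · by_cases hyin0 : y ∈ S0'
      · left
        constructor
        · exact exu_pair hN (fun h => hxc (Or.inl h)) (fun h => hxc (Or.inr h)) hyin0
            (Set.disjoint_left.mp hdisj' hyin0) hx0e
        · rw [Set.union_comm]
          exact exu_pair hN (fun h => hxc (Or.inr h)) (fun h => hxc (Or.inl h)) hyin0
            (Set.disjoint_left.mp hdisj' hyin0) hx1e
      · by_cases hyin1 : y ∈ S1'
        · left
          constructor
          · rw [Set.union_comm]
            exact exu_pair hN (fun h => hxc (Or.inr h)) (fun h => hxc (Or.inl h)) hyin1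
              hyin0 hx1e
          · exact exu_pair hN (fun h => hxc (Or.inl h)) (fun h => hxc (Or.inr h)) hyin1
              hyin0 hx0e
        · right
          have kill : ∀ u, u ∈ S0 ∪ S1 → ∀ v, v ∈ S0' ∪ S1' →
              ¬ (hammingGraph N q).Adj (fun i => Fin.append x y (Fin.cast hN i))
                (fun i => Fin.append u v (Fin.cast hN i)) := by
            intro u hu v hv hadj
            rcases (adj_append_iff hN x u y v).mp hadj with ⟨h1, rfl⟩ | ⟨rfl, h2⟩
            · rcases hv with hv | hv
              · exact hyin0 hv
              · exact hyin1 hv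
            · exact hxc hu
          rintro w ((⟨u, hu, v, hv, rfl⟩ | ⟨u, hu, v, hv, rfl⟩) |
            (⟨u, hu, v, hv, rfl⟩ | ⟨u, hu, v, hv, rfl⟩)) hadj
          · exact kill u (Or.inl hu) v (Or.inl hv) hadj
          · exact kill u (Or.inr hu) v (Or.inr hv) hadj
          · exact kill u (Or.inl hu) v (Or.inr hv) hadj
          · exact kill u (Or.inr hu) v (Or.inl hv) hadj
    · rcases Hy with ⟨hyc, hy0e, hy1e⟩ | hNy
      · by_cases hxin0 : x ∈ S0
        · left
          constructor
          · exact exu_pair' hN (fun u hu => hNx u hu) hxin0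
              (Set.disjoint_left.mp hdisj hxin0) hy0e
          · exact exu_pair' hN (fun u hu => hNx u hu) hxin0
              (Set.disjoint_left.mp hdisj hxin0) hy1e
        · by_cases hxin1 : x ∈ S1
          · left
            constructor
            · rw [Set.union_comm]
              exact exu_pair' hN (fun u hu => hNx u (hu.elim Or.inr Or.inl)) hxin1 hxin0 hy1e
            · rw [Set.union_comm]
              exact exu_pair' hN (fun u hu => hNx u (hu.elim Or.inr Or.inl)) hxin1 hxin0 hy0e
          · right
            have kill : ∀ u, u ∈ S0 ∪ S1 → ∀ v, v ∈ S0' ∪ S1' →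
                ¬ (hammingGraph N q).Adj (fun i => Fin.append x y (Fin.cast hN i))
                  (fun i => Fin.append u v (Fin.cast hN i)) := by
              intro u hu v hv hadj
              rcases (adj_append_iff hN x u y v).mp hadj with ⟨h1, rfl⟩ | ⟨rfl, h2⟩
              · exact hyc hv
              · rcases hu with hu | hu
                · exact hxin0 hu
                · exact hxin1 hu
            rintro w ((⟨u, hu, v, hv, rfl⟩ | ⟨u, hu, v, hv, rfl⟩) |
              (⟨u, hu, v, hv, rfl⟩ | ⟨u, hu, v, hv, rfl⟩)) hadj
            · exact kill u (Or.inl hu) v (Or.inl hv) hadj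
            · exact kill u (Or.inr hu) v (Or.inr hv) hadj
            · exact kill u (Or.inl hu) v (Or.inr hv) hadj
            · exact kill u (Or.inr hu) v (Or.inl hv) hadj
      · right
        have kill : ∀ u, u ∈ S0 ∪ S1 → ∀ v, v ∈ S0' ∪ S1' →
            ¬ (hammingGraph N q).Adj (fun i => Fin.append x y (Fin.cast hN i))
              (fun i => Fin.append u v (Fin.cast hN i)) := by
          intro u hu v hv hadj
          rcases (adj_append_iff hN x u y v).mp hadj with ⟨h1, rfl⟩ | ⟨rfl, h2⟩
          · exact hNx u hu h1
          · exact hNy v hv h2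
        rintro w ((⟨u, hu, v, hv, rfl⟩ | ⟨u, hu, v, hv, rfl⟩) |
          (⟨u, hu, v, hv, rfl⟩ | ⟨u, hu, v, hv, rfl⟩)) hadj
        · exact kill u (Or.inl hu) v (Or.inl hv) hadj
        · exact kill u (Or.inr hu) v (Or.inr hv) hadj
        · exact kill u (Or.inl hu) v (Or.inr hv) hadj
        · exact kill u (Or.inr hu) v (Or.inl hv) hadj

end Statement9Aux

/-- If `(S0,S1)` and `(S0',S1')` are spherical bitrades in `H(qr,q)` and
`H(qr',q)` respectively, then `(S0 × S0' ∪ S1 × S1', S0 × S1' ∪ S1 × S0')` is a spherical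
bitrade in `H(q(r+r'),q)`, where `×` is concatenation of tuples. -/
theorem statement9 (q r r' : ℕ) (hq : 3 ≤ q) (hr : 1 ≤ r) (hr' : 1 ≤ r')
    (S0 S1 : Set (Fin (q * r) → Fin q)) (S0' S1' : Set (Fin (q * r') → Fin q))
    (h : IsSphericalBitrade (hammingGraph (q * r) q) S0 S1)
    (h' : IsSphericalBitrade (hammingGraph (q * r') q) S0' S1') :
    IsSphericalBitrade (hammingGraph (q * (r + r')) q)
      (Set.image2 (fun x y i => Fin.append x y (Fin.cast (Nat.mul_add q r r') i)) S0 S0' ∪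
        Set.image2 (fun x y i => Fin.append x y (Fin.cast (Nat.mul_add q r r') i)) S1 S1')
      (Set.image2 (fun x y i => Fin.append x y (Fin.cast (Nat.mul_add q r r') i)) S0 S1' ∪
        Set.image2 (fun x y i => Fin.append x y (Fin.cast (Nat.mul_add q r r') i)) S1 S0') := by
  exact Statement9Aux.key hq (Nat.mul_add q r r') S0 S1 S0' S1' h h'
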